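/- Let w be a nonempty string over a finite alphabet Σ, let q and p be integers with q > |w| and p ≥ 1, let P be a string over Σ with |P| = q, and let t = w·pre(w^{p−1}, q−1). Then |Occ(w^p, P)| = Σ_{j ∈ Occ(t, P)} |{ m ∈ ℕ : j + m·|w| + q − 1 ≤ p·|w| }|. -/

import Mathlib

/-- `Occ T P` is the set of (1-based) occurrence positions of `P` in `T`:
`{ i : 1 ≤ i ≤ |T|−|P|+1 and T[i:i+|P|−1] = P }`. -/
def Occ {α : Type*} [DecidableEq α] (T P : List α) : Finset ℕ :=
  (Finset.Icc 1 (T.length - P.length + 1)).filter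
    (fun i => (T.drop (i - 1)).take P.length = P)

/-- `pre T k = T[1:min(k,|T|)]`, the prefix of `T` of length at most `k`. -/
def pre {α : Type*} (T : List α) (k : ℕ) : List α := T.take k

/-- `suf T k = T[|T|−min(k,|T|)+1:|T|]`, the suffix of `T` of length at most `k`. -/
def suf {α : Type*} (T : List α) (k : ℕ) : List α := T.drop (T.length - k)

/-- `listPow w p` is the `p`-fold concatenation `w^p`. -/
def listPow {α : Type*} (w : List α) : ℕ → List α
  | 0 => []
  | p + 1 => w ++ listPow w p

lemma listPow_length {α : Type*} (w : List α) (p : ℕ) :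
    (listPow w p).length = p * w.length := by
  induction p with
  | zero => simp [listPow]
  | succ p ih => simp [listPow, ih]; ring

lemma listPow_add {α : Type*} (w : List α) (a b : ℕ) :
    listPow w (a + b) = listPow w a ++ listPow w b := by
  induction a with
  | zero => simp [listPow]
  | succ a ih =>
    have : a + 1 + b = (a + b) + 1 := by omega
    rw [this]
    simp [listPow, ih]

lemma drop_listPow {α : Type*} (w : List α) {m p : ℕ} (h : m ≤ p) :
    (listPow w p).drop (m * w.length) = listPow w (p - m) := by
  conv_lhs => rw [show p = m + (p - m) by omega, listPow_add]
  rw [show m * w.length = (listPow w m).length by rw [listPow_length], List.drop_left]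

/-- Periodicity: a `q`-gram at offset `m*|w| + j` equals the one at offset `j`. -/
lemma take_drop_listPow_per {α : Type*} (w : List α) {m p q j : ℕ} (hm : m ≤ p)
    (h : j + q ≤ (p - m) * w.length) :
    ((listPow w p).drop (m * w.length + j)).take q = ((listPow w p).drop j).take q := by
  have hsplit : listPow w p = listPow w (p - m) ++ listPow w m := by
    conv_lhs => rw [show p = (p - m) + m by omega, listPow_add]
  rw [← List.drop_drop, drop_listPow w hm]
  conv_rhs => rw [hsplit, List.drop_append]
  rw [List.take_append_of_le_length]
  rw [List.length_drop, listPow_length]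
  omega

lemma take_drop_take {α : Type*} (T : List α) {j q k : ℕ} (h : j + q ≤ k) :
    ((T.take k).drop j).take q = (T.drop j).take q := by
  rw [List.drop_take, List.take_take]
  congr 1
  omega

lemma t_eq_take {α : Type*} (w : List α) (p q : ℕ) (hp : 1 ≤ p) :
    w ++ pre (listPow w (p - 1)) (q - 1) = (listPow w p).take (w.length + (q - 1)) := by
  conv_rhs => rw [show p = 1 + (p - 1) by omega, listPow_add]
  have h1 : listPow w 1 = w := by simp [listPow]
  rw [h1, show w.length + (q-1) = w.length + (q-1) from rfl, List.take_append]
  rw [List.take_of_length_le (by omega), Nat.add_sub_cancel_left]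
  rfl

/-- for `q > |w|`, `p ≥ 1` and `t = w·pre(w^{p−1}, q−1)`,
`|Occ(w^p,P)| = Σ_{j ∈ Occ(t,P)} |{ m ∈ ℕ : j + m·|w| + q − 1 ≤ p·|w| }|`. -/
theorem qgram_count_pow_short_period {α : Type*} [Fintype α] [DecidableEq α]
    (w : List α) (hw : w ≠ []) (q p : ℕ) (hq : w.length < q) (hp : 1 ≤ p)
    (P : List α) (hP : P.length = q) :
    (Occ (listPow w p) P).card =
      ∑ j ∈ Occ (w ++ pre (listPow w (p - 1)) (q - 1)) P,
        {m : ℕ | j + m * w.length + q - 1 ≤ p * w.length}.ncard := by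
  set n := w.length with hn_def
  have hn : 0 < n := List.length_pos_iff.mpr hw
  set T := listPow w p with hT
  set t := w ++ pre (listPow w (p - 1)) (q - 1) with ht
  have hTlen : T.length = p * n := listPow_length w p
  have htT : t = T.take (n + (q - 1)) := t_eq_take w p q hp
  have htlen : t.length = min (n + (q - 1)) (p * n) := by
    rw [htT, List.length_take, hTlen]
  have ht_le1 : t.length ≤ n + (q - 1) := by rw [htlen]; exact min_le_left _ _
  have ht_le2 : t.length ≤ p * n := by rw [htlen]; exact min_le_right _ _
  -- membership characterizations
  have memT : ∀ i, i ∈ Occ T P ↔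
      (1 ≤ i ∧ i ≤ p * n - q + 1 ∧ (T.drop (i - 1)).take q = P) := by
    intro i
    simp only [Occ, Finset.mem_filter, Finset.mem_Icc, hTlen, hP]
    tauto
  have memt : ∀ j, j ∈ Occ t P ↔
      (1 ≤ j ∧ j ≤ t.length - q + 1 ∧ (t.drop (j - 1)).take q = P) := by
    intro j
    simp only [Occ, Finset.mem_filter, Finset.mem_Icc, hP]
    tauto
  -- length fact from a q-gram equality
  have lenT : ∀ i : ℕ, (T.drop (i - 1)).take q = P → i - 1 + q ≤ p * n := by
    intro i h
    have := congrArg List.length h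
    simp only [List.length_take, List.length_drop, hTlen, hP] at this
    omega
  -- the fiber map
  have Hmap : ∀ i ∈ Occ T P, (i - 1) % n + 1 ∈ Occ t P := by
    intro i hi
    rw [memT] at hi
    obtain ⟨hi1, hi2, hsub⟩ := hi
    have hlen : i - 1 + q ≤ p * n := lenT i hsub
    set m := (i - 1) / n with hm_def
    set j := (i - 1) % n + 1 with hj_def
    have hjlt : j - 1 < n := by
      have := Nat.mod_lt (i - 1) hn
      omega
    have h0 := Nat.div_add_mod (i - 1) n
    rw [Nat.mul_comm, ← hm_def] at h0
    -- h0 : m * n + (i - 1) % n = i - 1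
    have hdm : i - 1 = m * n + (j - 1) := by omega
    have hmle : m ≤ p := by
      have h2 : m * n ≤ p * n := by omega
      exact Nat.le_of_mul_le_mul_right h2 hn
    have hcond : (j - 1) + q ≤ (p - m) * n := by
      rw [Nat.sub_mul]; omega
    rw [memt]
    refine ⟨by omega, ?_, ?_⟩
    · -- j ≤ t.length - q + 1
      have hlow : j - 1 + q ≤ t.length := by
        rw [htlen, Nat.le_min]
        constructor <;> omega
      omega
    · rw [htT, take_drop_take _ (by omega : (j - 1) + q ≤ n + (q - 1))]
      rw [← take_drop_listPow_per w hmle hcond, ← hn_def, ← hdm]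
      exact hsub
  rw [Finset.card_eq_sum_card_fiberwise Hmap]
  refine Finset.sum_congr rfl ?_
  intro j hj
  rw [memt] at hj
  obtain ⟨hj1, hj2, hjsub⟩ := hj
  have hjlt : j - 1 < n := by omega
  -- q-gram of T at offset j-1 equals P
  have hTj : (T.drop (j - 1)).take q = P := by
    rw [← hjsub, htT, take_drop_take _ (by omega : (j - 1) + q ≤ n + (q - 1))]
  -- identify the set with a finset
  have hset : {m : ℕ | j + m * n + q - 1 ≤ p * n} =
      ↑((Finset.range p).filter fun m => j + m * n + q - 1 ≤ p * n) := by
    ext m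
    simp only [Set.mem_setOf_eq, Finset.coe_filter, Finset.mem_range]
    constructor
    · intro h
      refine ⟨?_, h⟩
      have h1 : (m + 1) * n ≤ p * n := by
        rw [add_mul, one_mul]; omega
      have := Nat.le_of_mul_le_mul_right h1 hn
      -- m + 1 ≤ p, need m < p
      omega
    · tauto
  rw [hset, Set.ncard_coe_finset]
  refine Finset.card_bij' (fun i _ => (i - 1) / n) (fun m _ => j + m * n) ?_ ?_ ?_ ?_
  · -- forward map lands in target
    intro i hi
    simp only [Finset.mem_filter] at hi
    obtain ⟨hiOcc, hfib⟩ := hi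
    rw [memT] at hiOcc
    obtain ⟨hi1, hi2, hsub⟩ := hiOcc
    have hlen : i - 1 + q ≤ p * n := lenT i hsub
    have h0 := Nat.div_add_mod (i - 1) n
    rw [Nat.mul_comm] at h0
    -- h0 : (i - 1) / n * n + (i - 1) % n = i - 1
    simp only [Finset.mem_filter, Finset.mem_range]
    constructor
    · have h1 : ((i - 1) / n + 1) * n ≤ p * n := by
        rw [add_mul, one_mul]; omega
      have := Nat.le_of_mul_le_mul_right h1 hn
      omega
    · omega
  · -- backward map lands in fiber
    intro m hm
    simp only [Finset.mem_filter, Finset.mem_range] at hm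
    obtain ⟨hmp, hcond⟩ := hm
    have hmle : m ≤ p := le_of_lt hmp
    have hcond' : (j - 1) + q ≤ (p - m) * n := by
      rw [Nat.sub_mul]; omega
    simp only [Finset.mem_filter]
    refine ⟨?_, ?_⟩
    · rw [memT]
      refine ⟨by omega, by omega, ?_⟩
      have hdm : j + m * n - 1 = m * n + (j - 1) := by omega
      rw [hdm, take_drop_listPow_per w hmle hcond']
      exact hTj
    · have h : (j + m * n - 1) % n = (n * m + (j - 1)) % n := by
        rw [Nat.mul_comm n m]; congr 1; omega
      rw [h, Nat.mul_add_mod, Nat.mod_eq_of_lt hjlt]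
      omega
  · -- left inverse
    intro i hi
    simp only [Finset.mem_filter] at hi
    obtain ⟨hiOcc, hfib⟩ := hi
    rw [memT] at hiOcc
    obtain ⟨hi1, _, _⟩ := hiOcc
    have h0 := Nat.div_add_mod (i - 1) n
    rw [Nat.mul_comm] at h0
    show j + (i - 1) / n * n = i
    omega
  · -- right inverse
    intro m hm
    show (j + m * n - 1) / n = m
    have h : j + m * n - 1 = (j - 1) + n * m := by
      rw [Nat.mul_comm n m]; omega
    rw [h, Nat.add_mul_div_left _ _ hn, Nat.div_eq_of_lt hjlt, Nat.zero_add]
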